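/- arXiv:2011.09549 — 3 statements merged into one kernel-verified Lean document; each statement's English description precedes it below -/
import Mathlib

section
/- For fixed ν > 0, σ²ₐ > 0, and n_δ > 0, the Gönen Bayes factor BF10(t) = [(1 + t²/ν)/(1 + t²/(ν(1 + n_δ·σ²ₐ)))]^((ν+1)/2) · (1 + n_δ·σ²ₐ)^(−1/2) tends to the finite limit (1 + n_δ·σ²ₐ)^(ν/2) as t → ∞ (the information paradox). -/
open Real Filter

theorem stmt_6 (ν σa nδ : ℝ) (hν : 0 < ν) (hσ : 0 < σa) (hn : 0 < nδ) :
    Tendsto (fun t : ℝ =>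
        ((1 + t ^ 2 / ν) / (1 + t ^ 2 / (ν * (1 + nδ * σa)))) ^ ((ν + 1) / 2) *
          (1 + nδ * σa) ^ (-(1 : ℝ) / 2))
      atTop (nhds ((1 + nδ * σa) ^ (ν / 2))) := by
  set c : ℝ := 1 + nδ * σa with hcdef
  have hc : 0 < c := by positivity
  -- the base tends to c
  have hbase : Tendsto (fun t : ℝ => (1 + t ^ 2 / ν) / (1 + t ^ 2 / (ν * c)))
      atTop (nhds c) := by
    have key : ∀ t : ℝ, (1 + t ^ 2 / ν) / (1 + t ^ 2 / (ν * c))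
        = c + (c * ν * (1 - c)) * (ν * c + t ^ 2)⁻¹ := by
      intro t
      have hden : ν * c + t ^ 2 ≠ 0 := by positivity
      field_simp
      ring
    simp only [key]
    have h1 : Tendsto (fun t : ℝ => (ν * c + t ^ 2)⁻¹) atTop (nhds 0) := by
      apply Tendsto.inv_tendsto_atTop
      exact tendsto_atTop_add_const_left _ _ (tendsto_pow_atTop (by norm_num))
    have := (h1.const_mul (c * ν * (1 - c))).const_add c
    simpa using this
  have hpow : Tendsto (fun t : ℝ =>
      ((1 + t ^ 2 / ν) / (1 + t ^ 2 / (ν * c))) ^ ((ν + 1) / 2))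
      atTop (nhds (c ^ ((ν + 1) / 2))) :=
    hbase.rpow tendsto_const_nhds (Or.inl hc.ne')
  have := hpow.mul_const (c ^ (-(1 : ℝ) / 2))
  have heq : c ^ ((ν + 1) / 2) * c ^ (-(1 : ℝ) / 2) = c ^ (ν / 2) := by
    rw [← Real.rpow_add hc]
    ring_nf
  rwa [heq] at this
end

section
/- With the Pearson Type VI prior π(τ) = r(rτ)^β(1+rτ)^(−α−β−2)/B(α+1, β+1) where κ = r and β = (n−p)/2 − α − 2, the Garcia-Donato–Sun integral BF10 = ∫₀^∞ (1+τr)^((1−p)/2)·(1 − (τr/(1+τr))·(SSA/SST))^((1−n)/2)·π(τ) dτ evaluates in closed form to [Γ(p/2 + α + 1/2)·Γ((n−p)/2)] / [Γ((n−1)/2)·Γ(α+1)] · (SSR/SST)^(α − (n−p−2)/2), where SSR = SST − SSA. -/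
set_option maxHeartbeats 1000000
open Real MeasureTheory

lemma real_beta_Ioo (a b : ℝ) (ha : 0 < a) (hb : 0 < b) :
    ∫ x in Set.Ioo (0:ℝ) 1, x ^ (a - 1) * (1 - x) ^ (b - 1)
      = Gamma a * Gamma b / Gamma (a + b) := by
  have key := Complex.Gamma_mul_Gamma_eq_betaIntegral
    (s := (a : ℂ)) (t := (b : ℂ)) (by simpa using ha) (by simpa using hb)
  have hbeta : Complex.betaIntegral a b
      = ((∫ x in Set.Ioo (0:ℝ) 1, x ^ (a - 1) * (1 - x) ^ (b - 1) : ℝ) : ℂ) :=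
    calc Complex.betaIntegral a b
        = ∫ x in Set.Ioo (0:ℝ) 1, ((x ^ (a - 1) * (1 - x) ^ (b - 1) : ℝ) : ℂ) := by
          rw [Complex.betaIntegral, intervalIntegral.integral_of_le zero_le_one,
            integral_Ioc_eq_integral_Ioo]
          refine setIntegral_congr_fun measurableSet_Ioo fun x hx => ?_
          rw [Complex.ofReal_mul, Complex.ofReal_cpow hx.1.le,
            Complex.ofReal_cpow (by linarith [hx.2])]
          push_cast
          ring
      _ = _ := integral_ofReal
  rw [hbeta, ← Complex.ofReal_add, Complex.Gamma_ofReal, Complex.Gamma_ofReal,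
    Complex.Gamma_ofReal, ← Complex.ofReal_mul, ← Complex.ofReal_mul,
    Complex.ofReal_inj] at key
  have hG : Gamma (a + b) ≠ 0 := (Gamma_pos_of_pos (by linarith)).ne'
  field_simp [key]
  rw [key]; ring

theorem stmt_14 (n p : ℕ) (hp : 2 ≤ p) (α : ℝ) (hα1 : -1/2 ≤ α) (hα2 : α ≤ 0)
    (hnp : 2 * α + 2 < (n : ℝ) - p)
    (r : ℝ) (hr : r = (n : ℝ) / p) (hrpos : 0 < r)
    (SSA SST : ℝ) (hA : 0 < SSA) (hAT : SSA < SST)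
    (SSR : ℝ) (hSSR : SSR = SST - SSA)
    (β : ℝ) (hβ : β = ((n : ℝ) - p) / 2 - α - 2) :
    ∫ τ in Set.Ioi (0 : ℝ),
        (1 + τ * r) ^ ((1 - (p : ℝ)) / 2) *
          (1 - (τ * r / (1 + τ * r)) * (SSA / SST)) ^ ((1 - (n : ℝ)) / 2) *
          (r * (r * τ) ^ β * (1 + r * τ) ^ (-α - β - 2) /
            (Gamma (α + 1) * Gamma (β + 1) / Gamma (α + 1 + (β + 1)))) =
      Gamma ((p : ℝ) / 2 + α + 1 / 2) * Gamma (((n : ℝ) - p) / 2) /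
          (Gamma (((n : ℝ) - 1) / 2) * Gamma (α + 1)) *
        (SSR / SST) ^ (α - ((n : ℝ) - p - 2) / 2) := by
  have hTpos : 0 < SST := hA.trans hAT
  have hp2 : (2:ℝ) ≤ (p:ℝ) := by exact_mod_cast hp
  obtain ⟨B, hBdef⟩ : ∃ B : ℝ, B = Gamma (α + 1) * Gamma (β + 1) / Gamma (α + 1 + (β + 1)) :=
    ⟨_, rfl⟩
  obtain ⟨q, hqdef⟩ : ∃ q : ℝ, q = SSR / SST := ⟨_, rfl⟩
  rw [← hBdef, ← hqdef]
  have hq0 : 0 < q := by rw [hqdef]; exact div_pos (by rw [hSSR]; linarith) hTpos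
  obtain ⟨c, hcdef⟩ : ∃ c : ℝ, c = r * q := ⟨_, rfl⟩
  have hc0 : 0 < c := by rw [hcdef]; exact mul_pos hrpos hq0
  have hβ1 : 0 < β + 1 := by rw [hβ]; linarith
  have hbpos : 0 < (p:ℝ)/2 + α + 1/2 := by linarith
  -- Step 1: simplify integrand on Ioi 0
  have hstep1 : ∫ τ in Set.Ioi (0:ℝ),
      (1 + τ * r) ^ ((1 - (p : ℝ)) / 2) *
        (1 - (τ * r / (1 + τ * r)) * (SSA / SST)) ^ ((1 - (n : ℝ)) / 2) *
        (r * (r * τ) ^ β * (1 + r * τ) ^ (-α - β - 2) / B)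
      = ∫ τ in Set.Ioi (0:ℝ), r * (r * τ) ^ β * (1 + c * τ) ^ ((1 - (n : ℝ)) / 2) / B := by
    refine setIntegral_congr_fun measurableSet_Ioi fun τ hτ => ?_
    have hτ0 : (0:ℝ) < τ := hτ
    have h1t : (0:ℝ) < 1 + r * τ := by nlinarith
    have h1qt : (0:ℝ) < 1 + q * (r * τ) := by nlinarith
    have hck : 1 + c * τ = 1 + q * (r * τ) := by rw [hcdef]; ring
    have key1 : 1 - τ * r / (1 + τ * r) * (SSA / SST) = (1 + q * (r * τ)) / (1 + r * τ) := by
      rw [hqdef, hSSR]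
      rw [show 1 + τ * r = 1 + r * τ by ring]
      field_simp
      ring
    rw [key1, hck, Real.div_rpow h1qt.le h1t.le,
      show 1 + τ * r = 1 + r * τ by ring]
    have hpow : (1 + r * τ) ^ ((1 - (p:ℝ)) / 2) * (1 + r * τ) ^ (-α - β - 2)
        / (1 + r * τ) ^ ((1 - (n:ℝ)) / 2) = 1 := by
      rw [← Real.rpow_add h1t, ← Real.rpow_sub h1t,
        show (1 - (p:ℝ)) / 2 + (-α - β - 2) - (1 - (n:ℝ)) / 2 = 0 by rw [hβ]; ring,
        Real.rpow_zero]
    calc (1 + r * τ) ^ ((1 - (p:ℝ)) / 2) *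
          ((1 + q * (r * τ)) ^ ((1 - (n:ℝ)) / 2) / (1 + r * τ) ^ ((1 - (n:ℝ)) / 2)) *
          (r * (r * τ) ^ β * (1 + r * τ) ^ (-α - β - 2) / B)
        = ((1 + r * τ) ^ ((1 - (p:ℝ)) / 2) * (1 + r * τ) ^ (-α - β - 2)
            / (1 + r * τ) ^ ((1 - (n:ℝ)) / 2)) *
          (r * (r * τ) ^ β * (1 + q * (r * τ)) ^ ((1 - (n:ℝ)) / 2) / B) := by ring
      _ = r * (r * τ) ^ β * (1 + q * (r * τ)) ^ ((1 - (n:ℝ)) / 2) / B := by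
          rw [hpow, one_mul]
  rw [hstep1]
  -- Step 2: substitution τ = y / (c * (1 - y))
  obtain ⟨f, hfdef⟩ : ∃ f : ℝ → ℝ, f = fun y => y / (c * (1 - y)) := ⟨_, rfl⟩
  have himg : f '' Set.Ioo (0:ℝ) 1 = Set.Ioi (0:ℝ) := by
    ext τ
    constructor
    · rintro ⟨y, ⟨hy0, hy1⟩, rfl⟩
      simp only [hfdef]
      exact div_pos hy0 (mul_pos hc0 (by linarith))
    · intro hτ
      have hτ0 : (0:ℝ) < τ := hτ
      have h1 : (0:ℝ) < 1 + c * τ := by nlinarith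
      refine ⟨c * τ / (1 + c * τ), ⟨div_pos (mul_pos hc0 hτ0) h1,
        (div_lt_one h1).mpr (by nlinarith)⟩, ?_⟩
      rw [hfdef]
      show c * τ / (1 + c * τ) / (c * (1 - c * τ / (1 + c * τ))) = τ
      rw [show 1 - c * τ / (1 + c * τ) = 1 / (1 + c * τ) by field_simp; ring]
      field_simp
  have hderiv : ∀ y ∈ Set.Ioo (0:ℝ) 1,
      HasDerivWithinAt f (1 / (c * (1 - y) ^ 2)) (Set.Ioo (0:ℝ) 1) y := by
    intro y hy
    have h1y : (0:ℝ) < 1 - y := by linarith [hy.2]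
    have hd0 : c * (1 - y) ≠ 0 := (mul_pos hc0 h1y).ne'
    have hden : HasDerivAt (fun y : ℝ => c * (1 - y)) (c * (-1)) y :=
      ((hasDerivAt_id y).const_sub 1).const_mul c
    have h := (hasDerivAt_id y).div hden hd0
    simp only [id_eq] at h
    have heq : (1 * (c * (1 - y)) - y * (c * (-1))) / (c * (1 - y)) ^ 2
        = 1 / (c * (1 - y) ^ 2) := by
      field_simp
      ring
    rw [heq] at h
    rw [hfdef]
    exact h.hasDerivWithinAt
  have hinj : Set.InjOn f (Set.Ioo (0:ℝ) 1) := by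
    intro y1 h1 y2 h2 heq
    simp only [hfdef] at heq
    have e1 : (0:ℝ) < 1 - y1 := by linarith [h1.2]
    have e2 : (0:ℝ) < 1 - y2 := by linarith [h2.2]
    have heq' : y1 * (c * (1 - y2)) = y2 * (c * (1 - y1)) := by
      rw [div_eq_div_iff (mul_pos hc0 e1).ne' (mul_pos hc0 e2).ne'] at heq
      linear_combination heq
    have : c * y1 = c * y2 := by linear_combination heq'
    exact mul_left_cancel₀ hc0.ne' this
  rw [← himg, integral_image_eq_integral_abs_deriv_smul measurableSet_Ioo hderiv hinj]
  -- Step 3: simplify the new integrand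
  have hstep3 : ∫ y in Set.Ioo (0:ℝ) 1,
      |1 / (c * (1 - y) ^ 2)| • (r * (r * f y) ^ β * (1 + c * f y) ^ ((1 - (n:ℝ)) / 2) / B)
      = ∫ y in Set.Ioo (0:ℝ) 1,
        q ^ (-(β + 1)) / B * (y ^ ((β + 1) - 1) * (1 - y) ^ (((p:ℝ)/2 + α + 1/2) - 1)) := by
    refine setIntegral_congr_fun measurableSet_Ioo fun y hy => ?_
    have hy0 : (0:ℝ) < y := hy.1
    have h1y : (0:ℝ) < 1 - y := by linarith [hy.2]
    have hfy : r * f y = y / (q * (1 - y)) := by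
      rw [hfdef, hcdef]
      show r * (y / (r * q * (1 - y))) = y / (q * (1 - y))
      field_simp
    have h2 : 1 + c * f y = (1 - y)⁻¹ := by
      rw [hfdef]
      show 1 + c * (y / (c * (1 - y))) = (1 - y)⁻¹
      rw [eq_comm, inv_eq_iff_eq_inv, eq_comm]
      field_simp [hc0.ne', h1y.ne']
      ring
    rw [hfy, h2, smul_eq_mul, abs_of_pos (by positivity)]
    rw [Real.div_rpow hy0.le (mul_pos hq0 h1y).le, Real.mul_rpow hq0.le h1y.le,
      Real.inv_rpow h1y.le]
    have e3 : q ^ (-(β + 1)) = (q * q ^ β)⁻¹ := by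
      rw [Real.rpow_neg hq0.le, Real.rpow_add hq0, Real.rpow_one, mul_comm]
    have e4 : (1 - y) ^ (((p:ℝ)/2 + α + 1/2) - 1)
        = ((1 - y) ^ ((1 - (n:ℝ)) / 2))⁻¹ * ((1 - y) ^ β)⁻¹ * ((1 - y) ^ 2)⁻¹ := by
      rw [← Real.rpow_natCast (1 - y) 2, ← Real.rpow_neg h1y.le, ← Real.rpow_neg h1y.le,
        ← Real.rpow_neg h1y.le, ← Real.rpow_add h1y, ← Real.rpow_add h1y]
      congr 1
      rw [hβ]
      push_cast
      ring
    rw [e3, e4, hcdef, add_sub_cancel_right]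
    have hB0 : B ≠ 0 := by
      rw [hBdef]
      have := Gamma_pos_of_pos (show (0:ℝ) < α + 1 by linarith)
      have := Gamma_pos_of_pos hβ1
      have := Gamma_pos_of_pos (show (0:ℝ) < α + 1 + (β + 1) by linarith)
      positivity
    have hyb : y ^ β ≠ 0 := (Real.rpow_pos_of_pos hy0 β).ne'
    have hqb : q ^ β ≠ 0 := (Real.rpow_pos_of_pos hq0 β).ne'
    have h1yb : (1 - y) ^ β ≠ 0 := (Real.rpow_pos_of_pos h1y β).ne'
    have h1yn : (1 - y) ^ ((1 - (n:ℝ)) / 2) ≠ 0 :=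
      (Real.rpow_pos_of_pos h1y _).ne'
    field_simp [hrpos.ne', hq0.ne', h1y.ne', hB0]
  rw [hstep3, integral_const_mul, real_beta_Ioo (β + 1) ((p:ℝ)/2 + α + 1/2) hβ1 hbpos]
  -- Step 4: final Gamma algebra
  have hsum1 : β + 1 + ((p:ℝ)/2 + α + 1/2) = ((n:ℝ) - 1) / 2 := by rw [hβ]; ring
  have hsum2 : α + 1 + (β + 1) = ((n:ℝ) - p) / 2 := by rw [hβ]; ring
  have hexp : α - ((n:ℝ) - p - 2) / 2 = -(β + 1) := by rw [hβ]; ring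
  rw [hsum1, hBdef, hsum2, hexp]
  have hG1 : (0:ℝ) < Gamma (α + 1) := Gamma_pos_of_pos (by linarith)
  have hG2 : (0:ℝ) < Gamma (β + 1) := Gamma_pos_of_pos hβ1
  have hG3 : (0:ℝ) < Gamma (((n:ℝ) - p) / 2) := Gamma_pos_of_pos (by linarith)
  have hG4 : (0:ℝ) < Gamma (((n:ℝ) - 1) / 2) := Gamma_pos_of_pos (by linarith)
  have hG5 : (0:ℝ) < Gamma ((p:ℝ)/2 + α + 1/2) := Gamma_pos_of_pos hbpos
  field_simp
end

section
/- For fixed data with F > 0, x > 0, and y > 2α + 2, the Pearson Bayes factor PBF10(F) = [Γ(x/2 + α + 1)·Γ(y/2)] / [Γ((x+y)/2)·Γ(α+1)] · (y/(y + xF))^(α − y/2 + 1) is strictly increasing in F and tends to ∞ as F → ∞ (i.e., it does not suffer the information paradox). -/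
open Real Filter

theorem stmt_16 (x y α : ℝ) (hx : 0 < x) (hy : 0 < y)
    (hα1 : -1/2 ≤ α) (hα2 : α ≤ 0) (hyα : 2 * α + 2 < y) :
    StrictMonoOn (fun F : ℝ =>
        Gamma (x / 2 + α + 1) * Gamma (y / 2) /
            (Gamma ((x + y) / 2) * Gamma (α + 1)) *
          (y / (y + x * F)) ^ (α - y / 2 + 1))
      (Set.Ioi (0 : ℝ)) ∧
    Tendsto (fun F : ℝ =>
        Gamma (x / 2 + α + 1) * Gamma (y / 2) /
            (Gamma ((x + y) / 2) * Gamma (α + 1)) *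
          (y / (y + x * F)) ^ (α - y / 2 + 1))
      atTop atTop := by
  have hC : 0 < Gamma (x / 2 + α + 1) * Gamma (y / 2) /
      (Gamma ((x + y) / 2) * Gamma (α + 1)) := by
    have h1 : 0 < Gamma (x / 2 + α + 1) := Gamma_pos_of_pos (by linarith)
    have h2 : 0 < Gamma (y / 2) := Gamma_pos_of_pos (by linarith)
    have h3 : 0 < Gamma ((x + y) / 2) := Gamma_pos_of_pos (by linarith)
    have h4 : 0 < Gamma (α + 1) := Gamma_pos_of_pos (by linarith)
    positivity
  have he : α - y / 2 + 1 < 0 := by linarith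
  constructor
  · intro a ha b hb hab
    simp only [Set.mem_Ioi] at ha hb
    have hya : 0 < y + x * a := by nlinarith
    have hyb : 0 < y + x * b := by nlinarith
    have hbase : y / (y + x * b) < y / (y + x * a) :=
      div_lt_div_of_pos_left hy hya (by nlinarith)
    have hpos : 0 < y / (y + x * b) := by positivity
    exact mul_lt_mul_of_pos_left (rpow_lt_rpow_of_neg hpos hbase he) hC
  · have key : ∀ᶠ F in atTop,
        Gamma (x / 2 + α + 1) * Gamma (y / 2) /
            (Gamma ((x + y) / 2) * Gamma (α + 1)) *
          ((y + x * F) / y) ^ (-(α - y / 2 + 1))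
        = Gamma (x / 2 + α + 1) * Gamma (y / 2) /
            (Gamma ((x + y) / 2) * Gamma (α + 1)) *
          (y / (y + x * F)) ^ (α - y / 2 + 1) := by
      filter_upwards [eventually_gt_atTop 0] with F hF
      have hyF : 0 < y + x * F := by nlinarith
      rw [show (y + x * F) / y = (y / (y + x * F))⁻¹ from (inv_div y (y + x * F)).symm, Real.inv_rpow (by positivity), ← Real.rpow_neg (by positivity), neg_neg]
    rw [← tendsto_congr' key]
    apply Filter.Tendsto.const_mul_atTop hC
    refine (tendsto_rpow_atTop (by linarith)).comp ?_
    apply Tendsto.atTop_div_const hy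
    exact tendsto_atTop_add_const_left _ y (tendsto_id.const_mul_atTop hx)
end
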